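/- With g and ↶ as above, the bracket ⟦x, y⟧ := x ↶ y − y ↶ x + [x, y] satisfies the Jacobi identity and antisymmetry, i.e., (g, ⟦−,−⟧) is a Lie algebra (the derived Lie algebra of the post-Lie algebra). -/

import Mathlib

/-- Words over the alphabet X = {x₀, x₁}, encoded as lists of booleans
(`false` ↔ x₀, `true` ↔ x₁). -/
abbrev Word : Type := List Bool

/-- Noncommutative formal power series over X with real coefficients. -/
abbrev Series : Type := Word → ℝ

/-- Auxiliary recursion computing the coefficient of the shuffle product. -/
def sh : Word → Series → Series → ℝ
  | [], c, d => c [] * d []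
  | a :: w, c, d => sh w (fun u => c (a :: u)) d + sh w c (fun u => d (a :: u))

/-- The shuffle product of two series. -/
def shuffle (c d : Series) : Series := fun w => sh w c d

/-- Left concatenation by the letter x₀. -/
def X0f (c : Series) : Series := fun w =>
  match w with
  | false :: w' => c w'
  | _ => 0

/-- Left concatenation by the letter x₁. -/
def X1f (c : Series) : Series := fun w =>
  match w with
  | true :: w' => c w'
  | _ => 0

/-- The indicator series of a word. -/
def deltaW (η : Word) : Series := fun w => if w = η then 1 else 0

/-- The shuffle unit 1∅. -/
def oneS : Series := deltaW []

/-- Mixed composition product of a word with a pair of series: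
∅ ∘̃ z = ∅, (x₀η) ∘̃ z = x₀(η ∘̃ z),
(x₁η) ∘̃ z = x₁(z₁ ⧢ (η ∘̃ z)) + x₀(z₂ ⧢ (η ∘̃ z)). -/
def wmix : Word → Series × Series → Series
  | [], _ => oneS
  | false :: η, z => X0f (wmix η z)
  | true :: η, z => X1f (shuffle z.1 (wmix η z)) + X0f (shuffle z.2 (wmix η z))

/-- Mixed composition product `c ∘̃ z`, extended linearly in the left argument.
(Since `wmix η z` vanishes on words shorter than `η`, the sum may be truncated.) -/
def mixcomp (c : Series) (z : Series × Series) : Series := fun w =>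
  ∑ n ∈ Finset.range (w.length + 1), ∑ f : Fin n → Bool,
    c (List.ofFn f) * wmix (List.ofFn f) z w

/-- Composition product of a word with a series:
∅ ∘ d = ∅, (x₀η) ∘ d = x₀(η ∘ d), (x₁η) ∘ d = x₀(d ⧢ (η ∘ d)). -/
def wcomp : Word → Series → Series
  | [], _ => oneS
  | false :: η, d => X0f (wcomp η d)
  | true :: η, d => X0f (shuffle d (wcomp η d))

/-- Composition product `c ∘ d`, extended linearly in the left argument. -/
def compP (c d : Series) : Series := fun w =>
  ∑ n ∈ Finset.range (w.length + 1), ∑ f : Fin n → Bool,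
    c (List.ofFn f) * wcomp (List.ofFn f) d w

/-- The group product on G: (c₁,c₂)·(d₁,d₂) = (c₁ ⧢ d₁, c₂ + c₁ ⧢ d₂). -/
def gmul (c d : Series × Series) : Series × Series :=
  (shuffle c.1 d.1, c.2 + shuffle c.1 d.2)

/-- The identity element e = (1∅, 0) of G. -/
def geId : Series × Series := (oneS, 0)

/-- Shuffle powers. -/
def shPow (c : Series) : ℕ → Series
  | 0 => oneS
  | n + 1 => shuffle c (shPow c n)

/-- Shuffle inverse of a series with constant coefficient 1, via the
geometric series c^{⧢ -1} = Σ_k (1∅ - c)^{⧢ k} (truncated by word length,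
which is exact since 1∅ - c is proper). -/
def shInv (c : Series) : Series := fun w =>
  ∑ k ∈ Finset.range (w.length + 1), shPow (oneS - c) k w

/-- The group inverse in (G,·). -/
def ginv (c : Series × Series) : Series × Series :=
  (shInv c.1, -(shuffle (shInv c.1) c.2))

/-- The product ◁ on G, componentwise mixed composition. -/
def triOp (c d : Series × Series) : Series × Series :=
  (mixcomp c.1 d, mixcomp c.2 d)

/-- The Grossman–Larson product c ⋆ d = (c ◁ d) · d. -/
def starOp (c d : Series × Series) : Series × Series := gmul (triOp c d) d

/-- The Lie bracket on pairs: [(u₁,u₂),(v₁,v₂)] = (0, u₁ ⧢ v₂ - v₁ ⧢ u₂). -/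
def bracketG (u v : Series × Series) : Series × Series :=
  (0, shuffle u.1 v.2 - shuffle v.1 u.2)

/-- η e₁ = (η, 0). -/
def e1 (η : Word) : Series × Series := (deltaW η, 0)

/-- η e₂ = (0, η). -/
def e2 (η : Word) : Series × Series := (0, deltaW η)

/-- Post-Lie product of a word (appearing as η eᵢ) against ζ e₁ (right
argument in the e₁ component), producing the series carried in the eᵢ slot:
∅ ↶ ζe₁ = 0, (x₀η) ↶ ζe₁ = x₀(η ↶ ζe₁), (x₁η) ↶ ζe₁ = x₁(η ↶ ζe₁) + x₁(η ⧢ ζ). -/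
def pw1 : Word → Series → Series
  | [], _ => 0
  | false :: η, ζ => X0f (pw1 η ζ)
  | true :: η, ζ => X1f (pw1 η ζ) + X1f (shuffle (deltaW η) ζ)

/-- Post-Lie product against ζ e₂:
∅ ↶ ζe₂ = 0, (x₀η) ↶ ζe₂ = x₀(η ↶ ζe₂), (x₁η) ↶ ζe₂ = x₁(η ↶ ζe₂) + x₀(η ⧢ ζ). -/
def pw2 : Word → Series → Series
  | [], _ => 0
  | false :: η, ζ => X0f (pw2 η ζ)
  | true :: η, ζ => X1f (pw2 η ζ) + X0f (shuffle (deltaW η) ζ)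

/-- The post-Lie product ↶ on g, bilinear extension of the word-level rules. -/
def postL (u v : Series × Series) : Series × Series :=
  (fun w => ∑ n ∈ Finset.range (w.length + 1), ∑ f : Fin n → Bool,
      u.1 (List.ofFn f) * (pw1 (List.ofFn f) v.1 + pw2 (List.ofFn f) v.2) w,
   fun w => ∑ n ∈ Finset.range (w.length + 1), ∑ f : Fin n → Bool,
      u.2 (List.ofFn f) * (pw1 (List.ofFn f) v.1 + pw2 (List.ofFn f) v.2) w)

/-- Componentwise left concatenation by x₀. -/
def X0p (p : Series × Series) : Series × Series := (X0f p.1, X0f p.2)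

/-- Componentwise left concatenation by x₁. -/
def X1p (p : Series × Series) : Series × Series := (X1f p.1, X1f p.2)

/-- The derived Lie bracket ⟦x,y⟧ = x ↶ y - y ↶ x + [x,y]. -/
def dbr (x y : Series × Series) : Series × Series :=
  postL x y - postL y x + bracketG x y

def Lq (a : Bool) (c : Series) : Series := fun u => c (a :: u)

lemma sh_nil (c d : Series) : sh [] c d = c [] * d [] := rfl
lemma sh_cons (a : Bool) (w : Word) (c d : Series) :
    sh (a :: w) c d = sh w (Lq a c) d + sh w c (Lq a d) := rfl

lemma sh_zero_left (w : Word) (c d : Series) (h : ∀ u, c u = 0) : sh w c d = 0 := by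
  induction w generalizing c d with
  | nil => simp [sh_nil, h]
  | cons a w ih =>
      rw [sh_cons, ih (Lq a c) d (fun u => h _), ih c (Lq a d) h, add_zero]

lemma sh_add_left (w : Word) (c c₁ c₂ d : Series) (h : ∀ u, c u = c₁ u + c₂ u) :
    sh w c d = sh w c₁ d + sh w c₂ d := by
  induction w generalizing c c₁ c₂ d with
  | nil => simp [sh_nil, h]; ring
  | cons a w ih =>
      rw [sh_cons, sh_cons, sh_cons, ih (Lq a c) (Lq a c₁) (Lq a c₂) d (fun u => h _),
        ih c c₁ c₂ (Lq a d) h]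
      ring

lemma sh_smul_left (w : Word) (r : ℝ) (c c₁ d : Series) (h : ∀ u, c u = r * c₁ u) :
    sh w c d = r * sh w c₁ d := by
  induction w generalizing c c₁ d with
  | nil => simp [sh_nil, h]; ring
  | cons a w ih =>
      rw [sh_cons, sh_cons, ih (Lq a c) (Lq a c₁) d (fun u => h _), ih c c₁ (Lq a d) h]
      ring

lemma sh_comm (w : Word) (c d : Series) : sh w c d = sh w d c := by
  induction w generalizing c d with
  | nil => simp [sh_nil]; ring
  | cons a w ih => rw [sh_cons, sh_cons, ih (Lq a c) d, ih c (Lq a d), add_comm]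

lemma sh_congr_left (w : Word) (c c₁ d : Series) (h : ∀ u, c u = c₁ u) :
    sh w c d = sh w c₁ d := by
  have : c = c₁ := funext h
  rw [this]

lemma sh_sub_left (w : Word) (c c₁ c₂ d : Series) (h : ∀ u, c u = c₁ u - c₂ u) :
    sh w c d = sh w c₁ d - sh w c₂ d := by
  induction w generalizing c c₁ c₂ d with
  | nil => simp [sh_nil, h]; ring
  | cons a w ih =>
      rw [sh_cons, sh_cons, sh_cons, ih (Lq a c) (Lq a c₁) (Lq a c₂) d (fun u => h _),
        ih c c₁ c₂ (Lq a d) h]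
      ring

lemma Lq_shuffle (x : Bool) (a b : Series) (u : Word) :
    Lq x (shuffle a b) u = shuffle (Lq x a) b u + shuffle a (Lq x b) u := rfl

lemma sh_assoc (w : Word) (a b c : Series) :
    sh w (shuffle a b) c = sh w a (shuffle b c) := by
  induction w generalizing a b c with
  | nil => simp [sh_nil, shuffle, sh_nil]; ring
  | cons x w ih =>
      rw [sh_cons, sh_cons]
      rw [sh_add_left w (Lq x (shuffle a b)) (shuffle (Lq x a) b) (shuffle a (Lq x b)) c
        (Lq_shuffle x a b)]
      rw [sh_comm w a (Lq x (shuffle b c)),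
        sh_add_left w (Lq x (shuffle b c)) (shuffle (Lq x b) c) (shuffle b (Lq x c)) a
        (Lq_shuffle x b c),
        sh_comm w (shuffle (Lq x b) c) a, sh_comm w (shuffle b (Lq x c)) a]
      rw [ih (Lq x a) b c, ih a (Lq x b) c, ih a b (Lq x c)]
      ring
lemma ofFn_cons {n : ℕ} (b : Bool) (g : Fin n → Bool) :
    List.ofFn (Fin.cons b g : Fin (n+1) → Bool) = b :: List.ofFn g := by
  simp [List.ofFn_succ, Fin.cons_zero, Fin.cons_succ]

lemma sumWords (N : ℕ) (F : Word → ℝ) :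
    ∑ n ∈ Finset.range (N+1), ∑ f : Fin n → Bool, F (List.ofFn f)
      = F [] + ∑ n ∈ Finset.range N, ∑ g : Fin n → Bool,
          (F (false :: List.ofFn g) + F (true :: List.ofFn g)) := by
  rw [Finset.sum_range_succ']
  have h0 : (∑ f : Fin 0 → Bool, F (List.ofFn f)) = F [] := by simp
  rw [h0, add_comm]
  congr 1
  refine Finset.sum_congr rfl (fun n _ => ?_)
  rw [← Equiv.sum_comp (Fin.consEquiv (fun _ : Fin (n+1) => Bool))
      (fun f => F (List.ofFn f))]
  rw [Fintype.sum_prod_type]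
  rw [Fintype.sum_bool]
  simp only [Fin.consEquiv, Equiv.coe_fn_mk, ofFn_cons]
  rw [add_comm]
  rw [← Finset.sum_add_distrib]

lemma sh_sum_left {ι : Type*} (s : Finset ι) (w : Word) (c d : Series) (F : ι → Series)
    (h : ∀ u, c u = ∑ i ∈ s, F i u) : sh w c d = ∑ i ∈ s, sh w (F i) d := by
  classical
  induction s using Finset.induction generalizing c with
  | empty => simpa using sh_zero_left w c d (by simpa using h)
  | insert a s' hni ih =>
      rw [Finset.sum_insert hni]
      rw [sh_add_left w c (F a) (fun u => ∑ i ∈ s', F i u) d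
        (fun u => by rw [h u, Finset.sum_insert hni])]
      rw [ih _ (fun u => rfl)]

lemma sh_support (w : Word) (c c₁ d : Series) (h : ∀ u, u.length ≤ w.length → c u = c₁ u) :
    sh w c d = sh w c₁ d := by
  induction w generalizing c c₁ d with
  | nil => rw [sh_nil, sh_nil, h [] (by simp)]
  | cons a w ih =>
      rw [sh_cons, sh_cons, ih (Lq a c) (Lq a c₁) d
        (fun u hu => h (a :: u) (by simpa using Nat.succ_le_succ hu)),
        ih c c₁ (Lq a d) (fun u hu => h u (hu.trans (Nat.le_succ _)))]

lemma delta_inner (n : ℕ) (u : Word) (c : Series) :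
    ∑ f : Fin n → Bool, c (List.ofFn f) * deltaW (List.ofFn f) u
      = if u.length = n then c u else 0 := by
  by_cases h : u.length = n
  · subst h
    rw [if_pos rfl, Finset.sum_eq_single u.get]
    · simp [deltaW, List.ofFn_get]
    · intro f _ hf
      have hne : u ≠ List.ofFn f := by
        intro e
        exact hf (List.ofFn_inj.mp (by rw [List.ofFn_get, ← e])).symm
      simp [deltaW, hne]
    · intro hmem; exact absurd (Finset.mem_univ _) hmem
  · rw [if_neg h]
    refine Finset.sum_eq_zero (fun f _ => ?_)
    have hne : u ≠ List.ofFn f := fun e => h (by rw [e, List.length_ofFn])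
    simp [deltaW, hne]

lemma delta_sum (N : ℕ) (u : Word) (c : Series) :
    ∑ n ∈ Finset.range (N+1), ∑ f : Fin n → Bool,
        c (List.ofFn f) * deltaW (List.ofFn f) u
      = if u.length ≤ N then c u else 0 := by
  simp only [delta_inner]
  rw [Finset.sum_ite_eq (Finset.range (N+1)) u.length (fun _ => c u)]
  simp [Nat.lt_succ_iff]

lemma shuffle_expand (w : Word) (c d : Series) :
    ∑ n ∈ Finset.range (w.length+1), ∑ f : Fin n → Bool,
        c (List.ofFn f) * sh w (deltaW (List.ofFn f)) d
      = sh w c d := by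
  have step1 : ∀ n : ℕ, (∑ f : Fin n → Bool, c (List.ofFn f) * sh w (deltaW (List.ofFn f)) d)
      = sh w (fun u => ∑ f : Fin n → Bool, c (List.ofFn f) * deltaW (List.ofFn f) u) d := by
    intro n
    rw [sh_sum_left (Finset.univ : Finset (Fin n → Bool)) w _ d
      (fun f => fun u => c (List.ofFn f) * deltaW (List.ofFn f) u) (fun u => rfl)]
    refine Finset.sum_congr rfl (fun f _ => ?_)
    exact (sh_smul_left w (c (List.ofFn f)) _ (deltaW (List.ofFn f)) d (fun u => rfl)).symm
  calc ∑ n ∈ Finset.range (w.length+1), ∑ f : Fin n → Bool,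
        c (List.ofFn f) * sh w (deltaW (List.ofFn f)) d
      = sh w (fun u => ∑ n ∈ Finset.range (w.length+1), ∑ f : Fin n → Bool,
          c (List.ofFn f) * deltaW (List.ofFn f) u) d := by
        rw [sh_sum_left (Finset.range (w.length+1)) w _ d
          (fun n => fun u => ∑ f : Fin n → Bool, c (List.ofFn f) * deltaW (List.ofFn f) u)
          (fun u => rfl)]
        exact Finset.sum_congr rfl (fun n _ => step1 n)
    _ = sh w c d := by
        apply sh_support
        intro u hu
        rw [delta_sum, if_pos hu]

@[simp] lemma X0f_nil (c : Series) : X0f c [] = 0 := rfl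
@[simp] lemma X0f_false (c : Series) (w : Word) : X0f c (false :: w) = c w := rfl
@[simp] lemma X0f_true (c : Series) (w : Word) : X0f c (true :: w) = 0 := rfl
@[simp] lemma X1f_nil (c : Series) : X1f c [] = 0 := rfl
@[simp] lemma X1f_false (c : Series) (w : Word) : X1f c (false :: w) = 0 := rfl
@[simp] lemma X1f_true (c : Series) (w : Word) : X1f c (true :: w) = c w := rfl

def myP (c : Series) (z : Series × Series) : Series := fun w =>
  ∑ n ∈ Finset.range (w.length + 1), ∑ f : Fin n → Bool,
    c (List.ofFn f) * (pw1 (List.ofFn f) z.1 + pw2 (List.ofFn f) z.2) w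

lemma myP_nil (c : Series) (z : Series × Series) : myP c z [] = 0 := by
  simp [myP, pw1, pw2]

lemma myP_false (w : Word) (c : Series) (z : Series × Series) :
    myP c z (false :: w) = myP (Lq false c) z w + sh w (Lq true c) z.2 := by
  have h := sumWords (w.length+1)
    (fun η => c η * (pw1 η z.1 + pw2 η z.2) (false :: w))
  have e : myP c z (false :: w)
      = ∑ n ∈ Finset.range (w.length + 1 + 1), ∑ f : Fin n → Bool,
          (fun η => c η * (pw1 η z.1 + pw2 η z.2) (false :: w)) (List.ofFn f) := rfl
  rw [e, h, ← shuffle_expand w (Lq true c) z.2]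
  simp only [pw1, pw2, Pi.add_apply, X0f_nil, X0f_false, X0f_true, X1f_nil, X1f_false,
    X1f_true, Pi.zero_apply, mul_zero, add_zero, zero_add, myP, Lq, shuffle,
    Finset.sum_add_distrib]


lemma myP_true (w : Word) (c : Series) (z : Series × Series) :
    myP c z (true :: w) = myP (Lq true c) z w + sh w (Lq true c) z.1 := by
  have h := sumWords (w.length+1)
    (fun η => c η * (pw1 η z.1 + pw2 η z.2) (true :: w))
  have e : myP c z (true :: w)
      = ∑ n ∈ Finset.range (w.length + 1 + 1), ∑ f : Fin n → Bool,
          (fun η => c η * (pw1 η z.1 + pw2 η z.2) (true :: w)) (List.ofFn f) := rfl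
  rw [e, h, ← shuffle_expand w (Lq true c) z.1]
  simp only [pw1, pw2, Pi.add_apply, X0f_nil, X0f_false, X0f_true, X1f_nil, X1f_false,
    X1f_true, Pi.zero_apply, mul_zero, add_zero, zero_add, myP, Lq, shuffle,
    Finset.sum_add_distrib]
  rw [← Finset.sum_add_distrib]
  refine Finset.sum_congr rfl fun n _ => ?_
  rw [← Finset.sum_add_distrib]
  refine Finset.sum_congr rfl fun g _ => ?_
  ring


lemma postL_def (u v : Series × Series) : postL u v = (myP u.1 v, myP u.2 v) := rfl

lemma sh_congr_right (w : Word) (c d d₁ : Series) (h : ∀ u, d u = d₁ u) :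
    sh w c d = sh w c d₁ := by rw [funext h]

lemma sh_add_right (w : Word) (c d d₁ d₂ : Series) (h : ∀ u, d u = d₁ u + d₂ u) :
    sh w c d = sh w c d₁ + sh w c d₂ := by
  rw [sh_comm w c d, sh_add_left w d d₁ d₂ c h, sh_comm w d₁ c, sh_comm w d₂ c]

lemma sh_sub_right (w : Word) (c d d₁ d₂ : Series) (h : ∀ u, d u = d₁ u - d₂ u) :
    sh w c d = sh w c d₁ - sh w c d₂ := by
  rw [sh_comm w c d, sh_sub_left w d d₁ d₂ c h, sh_comm w d₁ c, sh_comm w d₂ c]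

lemma sh_comb_right (w : Word) (c d d₁ d₂ d₃ : Series)
    (h : ∀ u, d u = d₁ u - d₂ u + d₃ u) :
    sh w c d = sh w c d₁ - sh w c d₂ + sh w c d₃ := by
  rw [sh_add_right w c d (fun u => d₁ u - d₂ u) d₃ h,
    sh_sub_right w c (fun u => d₁ u - d₂ u) d₁ d₂ (fun u => rfl)]

lemma sh_zero_right (w : Word) (c d : Series) (h : ∀ u, d u = 0) : sh w c d = 0 := by
  rw [sh_comm]; exact sh_zero_left w d c h

lemma myP_add1 (w : Word) (c c₁ c₂ : Series) (z : Series × Series)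
    (h : ∀ u, c u = c₁ u + c₂ u) : myP c z w = myP c₁ z w + myP c₂ z w := by
  simp only [myP, h, add_mul, Finset.sum_add_distrib]

lemma myP_sub1 (w : Word) (c c₁ c₂ : Series) (z : Series × Series)
    (h : ∀ u, c u = c₁ u - c₂ u) : myP c z w = myP c₁ z w - myP c₂ z w := by
  simp only [myP, h, sub_mul, Finset.sum_sub_distrib]

lemma myP_comb1 (w : Word) (c c₁ c₂ c₃ c₄ : Series) (z : Series × Series)
    (h : ∀ u, c u = c₁ u - c₂ u + c₃ u - c₄ u) :
    myP c z w = myP c₁ z w - myP c₂ z w + myP c₃ z w - myP c₄ z w := by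
  simp only [myP, h, sub_mul, add_mul, Finset.sum_sub_distrib, Finset.sum_add_distrib]

lemma pw1_comb (η : Word) (a b c : Series) (w : Word) :
    pw1 η (a - b + c) w = pw1 η a w - pw1 η b w + pw1 η c w := by
  induction η generalizing w with
  | nil => simp [pw1]
  | cons x η ih =>
      cases x with
      | false =>
          rcases w with _ | ⟨_ | _, w⟩ <;> simp [pw1, ih]
      | true =>
          rcases w with _ | ⟨x, w⟩
          · simp [pw1]
          · cases x
            · simp [pw1]
            · simp only [pw1, Pi.add_apply, X1f_true, shuffle]
              rw [ih w, sh_comb_right w (deltaW η) (a - b + c) a b c (fun u => by simp)]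
              ring

lemma pw2_comb (η : Word) (a b c : Series) (w : Word) :
    pw2 η (a - b + c) w = pw2 η a w - pw2 η b w + pw2 η c w := by
  induction η generalizing w with
  | nil => simp [pw2]
  | cons x η ih =>
      cases x with
      | false =>
          rcases w with _ | ⟨_ | _, w⟩ <;> simp [pw2, ih]
      | true =>
          rcases w with _ | ⟨x, w⟩
          · simp [pw2]
          · cases x
            · simp only [pw2, Pi.add_apply, X1f_false, X0f_false, zero_add, shuffle]
              exact sh_comb_right w (deltaW η) (a - b + c) a b c (fun u => by simp)
            · simp only [pw2, Pi.add_apply, X1f_true, X0f_true, add_zero]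
              exact ih w

lemma myP_comb2 (w : Word) (c : Series) (p q r : Series × Series) :
    myP c (p - q + r) w = myP c p w - myP c q w + myP c r w := by
  simp only [myP, Prod.fst_sub, Prod.fst_add, Prod.snd_sub, Prod.snd_add, Pi.add_apply,
    pw1_comb, pw2_comb, mul_add, mul_sub, Finset.sum_add_distrib, Finset.sum_sub_distrib]
  ring

lemma A1 (w : Word) : ∀ (c₁ c₂ : Series) (z : Series × Series),
    myP (shuffle c₁ c₂) z w = sh w (myP c₁ z) c₂ + sh w c₁ (myP c₂ z) := by
  induction w with
  | nil =>
      intro c₁ c₂ z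
      rw [myP_nil, sh_nil, sh_nil, myP_nil, myP_nil]; ring
  | cons a w ih =>
      intro c₁ c₂ z
      have hcomm : ∀ (b : Bool) (e : Series),
          sh w (shuffle (Lq b c₁) e) c₂ = sh w (shuffle (Lq b c₁) c₂) e :=
        fun b e => by
          rw [sh_assoc, sh_assoc]
          exact sh_congr_right w (Lq b c₁) (shuffle e c₂) (shuffle c₂ e)
            (fun u => sh_comm u e c₂)
      cases a with
      | false =>
          rw [myP_false,
            myP_add1 w (Lq false (shuffle c₁ c₂)) (shuffle (Lq false c₁) c₂)
              (shuffle c₁ (Lq false c₂)) z (Lq_shuffle false c₁ c₂),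
            sh_add_left w (Lq true (shuffle c₁ c₂)) (shuffle (Lq true c₁) c₂)
              (shuffle c₁ (Lq true c₂)) z.2 (Lq_shuffle true c₁ c₂),
            ih (Lq false c₁) c₂ z, ih c₁ (Lq false c₂) z,
            sh_cons, sh_cons,
            sh_add_left w (Lq false (myP c₁ z)) (myP (Lq false c₁) z)
              (shuffle (Lq true c₁) z.2) c₂ (fun u => myP_false u c₁ z),
            sh_add_right w c₁ (Lq false (myP c₂ z)) (myP (Lq false c₂) z)
              (shuffle (Lq true c₂) z.2) (fun u => myP_false u c₂ z)]
          have h1 : sh w (shuffle (Lq true c₁) z.2) c₂ = sh w (shuffle (Lq true c₁) c₂) z.2 :=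
            hcomm true z.2
          have h2 : sh w (shuffle c₁ (Lq true c₂)) z.2 = sh w c₁ (shuffle (Lq true c₂) z.2) :=
            sh_assoc w c₁ (Lq true c₂) z.2
          linarith
      | true =>
          rw [myP_true,
            myP_add1 w (Lq true (shuffle c₁ c₂)) (shuffle (Lq true c₁) c₂)
              (shuffle c₁ (Lq true c₂)) z (Lq_shuffle true c₁ c₂),
            sh_add_left w (Lq true (shuffle c₁ c₂)) (shuffle (Lq true c₁) c₂)
              (shuffle c₁ (Lq true c₂)) z.1 (Lq_shuffle true c₁ c₂),
            ih (Lq true c₁) c₂ z, ih c₁ (Lq true c₂) z,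
            sh_cons, sh_cons,
            sh_add_left w (Lq true (myP c₁ z)) (myP (Lq true c₁) z)
              (shuffle (Lq true c₁) z.1) c₂ (fun u => myP_true u c₁ z),
            sh_add_right w c₁ (Lq true (myP c₂ z)) (myP (Lq true c₂) z)
              (shuffle (Lq true c₂) z.1) (fun u => myP_true u c₂ z)]
          have h1 : sh w (shuffle (Lq true c₁) z.1) c₂ = sh w (shuffle (Lq true c₁) c₂) z.1 :=
            hcomm true z.1
          have h2 : sh w (shuffle c₁ (Lq true c₂)) z.1 = sh w c₁ (shuffle (Lq true c₂) z.1) :=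
            sh_assoc w c₁ (Lq true c₂) z.1
          linarith

lemma A2 (w : Word) : ∀ (c : Series) (y z : Series × Series),
    myP c (postL y z) w - myP (myP c y) z w - myP c (postL z y) w
      + myP (myP c z) y w + myP c (bracketG y z) w = 0 := by
  induction w with
  | nil =>
      intro c y z
      rw [myP_nil, myP_nil, myP_nil, myP_nil, myP_nil]; ring
  | cons a w ih =>
      intro c y z
      cases a with
      | false =>
          rw [myP_false w c (postL y z), myP_false w (myP c y) z,
            myP_false w c (postL z y), myP_false w (myP c z) y,
            myP_false w c (bracketG y z)]
          have e1 : sh w (Lq true c) (postL y z).2 = sh w (Lq true c) (myP y.2 z) := rfl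
          have e2 : sh w (Lq true c) (postL z y).2 = sh w (Lq true c) (myP z.2 y) := rfl
          have e3 : sh w (Lq true c) (bracketG y z).2
              = sh w (Lq true c) (shuffle y.1 z.2) - sh w (Lq true c) (shuffle z.1 y.2) :=
            sh_sub_right w (Lq true c) (bracketG y z).2 (shuffle y.1 z.2) (shuffle z.1 y.2)
              (fun u => rfl)
          rw [e1, e2, e3,
            myP_add1 w (Lq false (myP c y)) (myP (Lq false c) y)
              (shuffle (Lq true c) y.2) z (fun u => myP_false u c y),
            sh_add_left w (Lq true (myP c y)) (myP (Lq true c) y)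
              (shuffle (Lq true c) y.1) z.2 (fun u => myP_true u c y),
            myP_add1 w (Lq false (myP c z)) (myP (Lq false c) z)
              (shuffle (Lq true c) z.2) y (fun u => myP_false u c z),
            sh_add_left w (Lq true (myP c z)) (myP (Lq true c) z)
              (shuffle (Lq true c) z.1) y.2 (fun u => myP_true u c z)]
          have hih := ih (Lq false c) y z
          have hA := A1 w (Lq true c) y.2 z
          have hB := A1 w (Lq true c) z.2 y
          have hC : sh w (shuffle (Lq true c) y.1) z.2 = sh w (Lq true c) (shuffle y.1 z.2) :=
            sh_assoc w (Lq true c) y.1 z.2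
          have hD : sh w (shuffle (Lq true c) z.1) y.2 = sh w (Lq true c) (shuffle z.1 y.2) :=
            sh_assoc w (Lq true c) z.1 y.2
          linarith
      | true =>
          rw [myP_true w c (postL y z), myP_true w (myP c y) z,
            myP_true w c (postL z y), myP_true w (myP c z) y,
            myP_true w c (bracketG y z)]
          have e1 : sh w (Lq true c) (postL y z).1 = sh w (Lq true c) (myP y.1 z) := rfl
          have e2 : sh w (Lq true c) (postL z y).1 = sh w (Lq true c) (myP z.1 y) := rfl
          have e3 : sh w (Lq true c) (bracketG y z).1 = 0 :=
            sh_zero_right w (Lq true c) (bracketG y z).1 (fun u => rfl)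
          rw [e1, e2, e3,
            myP_add1 w (Lq true (myP c y)) (myP (Lq true c) y)
              (shuffle (Lq true c) y.1) z (fun u => myP_true u c y),
            sh_add_left w (Lq true (myP c y)) (myP (Lq true c) y)
              (shuffle (Lq true c) y.1) z.1 (fun u => myP_true u c y),
            myP_add1 w (Lq true (myP c z)) (myP (Lq true c) z)
              (shuffle (Lq true c) z.1) y (fun u => myP_true u c z),
            sh_add_left w (Lq true (myP c z)) (myP (Lq true c) z)
              (shuffle (Lq true c) z.1) y.1 (fun u => myP_true u c z)]
          have hih := ih (Lq true c) y z
          have hA := A1 w (Lq true c) y.1 z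
          have hB := A1 w (Lq true c) z.1 y
          have hC : sh w (shuffle (Lq true c) y.1) z.1 = sh w (shuffle (Lq true c) z.1) y.1 := by
            rw [sh_assoc, sh_assoc]
            exact sh_congr_right w (Lq true c) (shuffle y.1 z.1) (shuffle z.1 y.1)
              (fun u => sh_comm u y.1 z.1)
          linarith

lemma sh_comb4_left (w : Word) (c c₁ c₂ c₃ c₄ d : Series)
    (h : ∀ u, c u = c₁ u - c₂ u + c₃ u - c₄ u) :
    sh w c d = sh w c₁ d - sh w c₂ d + sh w c₃ d - sh w c₄ d := by
  rw [sh_sub_left w c (fun u => c₁ u - c₂ u + c₃ u) c₄ d (fun u => h u),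
    sh_add_left w (fun u => c₁ u - c₂ u + c₃ u) (fun u => c₁ u - c₂ u) c₃ d (fun u => rfl),
    sh_sub_left w (fun u => c₁ u - c₂ u) c₁ c₂ d (fun u => rfl)]

lemma sh_comb4_right (w : Word) (c d d₁ d₂ d₃ d₄ : Series)
    (h : ∀ u, d u = d₁ u - d₂ u + d₃ u - d₄ u) :
    sh w c d = sh w c d₁ - sh w c d₂ + sh w c d₃ - sh w c d₄ := by
  rw [sh_comm w c d, sh_comb4_left w d d₁ d₂ d₃ d₄ c h, sh_comm w d₁ c, sh_comm w d₂ c,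
    sh_comm w d₃ c, sh_comm w d₄ c]

lemma sh_swap (u : Word) (p q r : Series) : sh u p (shuffle q r) = sh u q (shuffle p r) := by
  rw [← sh_assoc u p q r, ← sh_assoc u q p r]
  exact sh_congr_left u (shuffle p q) (shuffle q p) r (fun v => sh_comm v p q)

lemma dbr_fst (a b : Series × Series) (u : Word) :
    (dbr a b).1 u = myP a.1 b u - myP b.1 a u := by
  simp [dbr, postL_def, bracketG]

lemma dbr_snd (a b : Series × Series) (u : Word) :
    (dbr a b).2 u = myP a.2 b u - myP b.2 a u + sh u a.1 b.2 - sh u b.1 a.2 := by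
  simp [dbr, postL_def, bracketG, shuffle]
  ring

/-- the derived bracket ⟦x,y⟧ = x ↶ y - y ↶ x + [x,y] is
antisymmetric and satisfies the Jacobi identity, i.e. (g, ⟦-,-⟧) is a Lie
algebra. -/
theorem derived_bracket_lie :
    (∀ x y : Series × Series, x.1 [] = 0 → y.1 [] = 0 →
      dbr x y = -dbr y x) ∧
    (∀ x y z : Series × Series, x.1 [] = 0 → y.1 [] = 0 → z.1 [] = 0 →
      dbr (dbr x y) z + dbr (dbr y z) x + dbr (dbr z x) y = 0) := by
  constructor
  · intro x y _ _
    have h1 : (dbr x y).1 = (-dbr y x).1 := funext fun u => by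
      rw [dbr_fst, Prod.fst_neg, Pi.neg_apply, dbr_fst]; ring
    have h2 : (dbr x y).2 = (-dbr y x).2 := funext fun u => by
      rw [dbr_snd, Prod.snd_neg, Pi.neg_apply, dbr_snd]; ring
    exact Prod.ext h1 h2
  · intro x y z _ _ _
    have h1 : (dbr (dbr x y) z + dbr (dbr y z) x + dbr (dbr z x) y).1
        = (0 : Series × Series).1 := by
      funext u
      simp only [Prod.fst_add, Pi.add_apply, Prod.fst_zero, Pi.zero_apply]
      rw [dbr_fst (dbr x y) z u, dbr_fst (dbr y z) x u, dbr_fst (dbr z x) y u]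
      have exy : myP (dbr x y).1 z u = myP (myP x.1 y) z u - myP (myP y.1 x) z u :=
        myP_sub1 u (dbr x y).1 (myP x.1 y) (myP y.1 x) z (fun v => dbr_fst x y v)
      have eyz : myP (dbr y z).1 x u = myP (myP y.1 z) x u - myP (myP z.1 y) x u :=
        myP_sub1 u (dbr y z).1 (myP y.1 z) (myP z.1 y) x (fun v => dbr_fst y z v)
      have ezx : myP (dbr z x).1 y u = myP (myP z.1 x) y u - myP (myP x.1 z) y u :=
        myP_sub1 u (dbr z x).1 (myP z.1 x) (myP x.1 z) y (fun v => dbr_fst z x v)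
      have fxy : myP z.1 (dbr x y) u
          = myP z.1 (postL x y) u - myP z.1 (postL y x) u + myP z.1 (bracketG x y) u :=
        myP_comb2 u z.1 (postL x y) (postL y x) (bracketG x y)
      have fyz : myP x.1 (dbr y z) u
          = myP x.1 (postL y z) u - myP x.1 (postL z y) u + myP x.1 (bracketG y z) u :=
        myP_comb2 u x.1 (postL y z) (postL z y) (bracketG y z)
      have fzx : myP y.1 (dbr z x) u
          = myP y.1 (postL z x) u - myP y.1 (postL x z) u + myP y.1 (bracketG z x) u :=
        myP_comb2 u y.1 (postL z x) (postL x z) (bracketG z x)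
      have a1 := A2 u z.1 x y
      have a2 := A2 u x.1 y z
      have a3 := A2 u y.1 z x
      linarith
    have h2 : (dbr (dbr x y) z + dbr (dbr y z) x + dbr (dbr z x) y).2
        = (0 : Series × Series).2 := by
      funext u
      simp only [Prod.snd_add, Pi.add_apply, Prod.snd_zero, Pi.zero_apply]
      rw [dbr_snd (dbr x y) z u, dbr_snd (dbr y z) x u, dbr_snd (dbr z x) y u]
      have exy : myP (dbr x y).2 z u = myP (myP x.2 y) z u - myP (myP y.2 x) z u
          + myP (shuffle x.1 y.2) z u - myP (shuffle y.1 x.2) z u :=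
        myP_comb1 u (dbr x y).2 (myP x.2 y) (myP y.2 x) (shuffle x.1 y.2) (shuffle y.1 x.2)
          z (fun v => dbr_snd x y v)
      have eyz : myP (dbr y z).2 x u = myP (myP y.2 z) x u - myP (myP z.2 y) x u
          + myP (shuffle y.1 z.2) x u - myP (shuffle z.1 y.2) x u :=
        myP_comb1 u (dbr y z).2 (myP y.2 z) (myP z.2 y) (shuffle y.1 z.2) (shuffle z.1 y.2)
          x (fun v => dbr_snd y z v)
      have ezx : myP (dbr z x).2 y u = myP (myP z.2 x) y u - myP (myP x.2 z) y u
          + myP (shuffle z.1 x.2) y u - myP (shuffle x.1 z.2) y u :=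
        myP_comb1 u (dbr z x).2 (myP z.2 x) (myP x.2 z) (shuffle z.1 x.2) (shuffle x.1 z.2)
          y (fun v => dbr_snd z x v)
      have fxy : myP z.2 (dbr x y) u
          = myP z.2 (postL x y) u - myP z.2 (postL y x) u + myP z.2 (bracketG x y) u :=
        myP_comb2 u z.2 (postL x y) (postL y x) (bracketG x y)
      have fyz : myP x.2 (dbr y z) u
          = myP x.2 (postL y z) u - myP x.2 (postL z y) u + myP x.2 (bracketG y z) u :=
        myP_comb2 u x.2 (postL y z) (postL z y) (bracketG y z)
      have fzx : myP y.2 (dbr z x) u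
          = myP y.2 (postL z x) u - myP y.2 (postL x z) u + myP y.2 (bracketG z x) u :=
        myP_comb2 u y.2 (postL z x) (postL x z) (bracketG z x)
      have a1 := A2 u z.2 x y
      have a2 := A2 u x.2 y z
      have a3 := A2 u y.2 z x
      have gxy : sh u (dbr x y).1 z.2 = sh u (myP x.1 y) z.2 - sh u (myP y.1 x) z.2 :=
        sh_sub_left u (dbr x y).1 (myP x.1 y) (myP y.1 x) z.2 (fun v => dbr_fst x y v)
      have gyz : sh u (dbr y z).1 x.2 = sh u (myP y.1 z) x.2 - sh u (myP z.1 y) x.2 :=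
        sh_sub_left u (dbr y z).1 (myP y.1 z) (myP z.1 y) x.2 (fun v => dbr_fst y z v)
      have gzx : sh u (dbr z x).1 y.2 = sh u (myP z.1 x) y.2 - sh u (myP x.1 z) y.2 :=
        sh_sub_left u (dbr z x).1 (myP z.1 x) (myP x.1 z) y.2 (fun v => dbr_fst z x v)
      have kxy : sh u z.1 (dbr x y).2 = sh u z.1 (myP x.2 y) - sh u z.1 (myP y.2 x)
          + sh u z.1 (shuffle x.1 y.2) - sh u z.1 (shuffle y.1 x.2) :=
        sh_comb4_right u z.1 (dbr x y).2 (myP x.2 y) (myP y.2 x) (shuffle x.1 y.2)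
          (shuffle y.1 x.2) (fun v => dbr_snd x y v)
      have kyz : sh u x.1 (dbr y z).2 = sh u x.1 (myP y.2 z) - sh u x.1 (myP z.2 y)
          + sh u x.1 (shuffle y.1 z.2) - sh u x.1 (shuffle z.1 y.2) :=
        sh_comb4_right u x.1 (dbr y z).2 (myP y.2 z) (myP z.2 y) (shuffle y.1 z.2)
          (shuffle z.1 y.2) (fun v => dbr_snd y z v)
      have kzx : sh u y.1 (dbr z x).2 = sh u y.1 (myP z.2 x) - sh u y.1 (myP x.2 z)
          + sh u y.1 (shuffle z.1 x.2) - sh u y.1 (shuffle x.1 z.2) :=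
        sh_comb4_right u y.1 (dbr z x).2 (myP z.2 x) (myP x.2 z) (shuffle z.1 x.2)
          (shuffle x.1 z.2) (fun v => dbr_snd z x v)
      have b1 : myP (shuffle x.1 y.2) z u = sh u (myP x.1 z) y.2 + sh u x.1 (myP y.2 z) :=
        A1 u x.1 y.2 z
      have b2 : myP (shuffle y.1 x.2) z u = sh u (myP y.1 z) x.2 + sh u y.1 (myP x.2 z) :=
        A1 u y.1 x.2 z
      have b3 : myP (shuffle y.1 z.2) x u = sh u (myP y.1 x) z.2 + sh u y.1 (myP z.2 x) :=
        A1 u y.1 z.2 x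
      have b4 : myP (shuffle z.1 y.2) x u = sh u (myP z.1 x) y.2 + sh u z.1 (myP y.2 x) :=
        A1 u z.1 y.2 x
      have b5 : myP (shuffle z.1 x.2) y u = sh u (myP z.1 y) x.2 + sh u z.1 (myP x.2 y) :=
        A1 u z.1 x.2 y
      have b6 : myP (shuffle x.1 z.2) y u = sh u (myP x.1 y) z.2 + sh u x.1 (myP z.2 y) :=
        A1 u x.1 z.2 y
      have s1 : sh u z.1 (shuffle x.1 y.2) = sh u x.1 (shuffle z.1 y.2) := sh_swap u z.1 x.1 y.2
      have s2 : sh u z.1 (shuffle y.1 x.2) = sh u y.1 (shuffle z.1 x.2) := sh_swap u z.1 y.1 x.2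
      have s3 : sh u x.1 (shuffle y.1 z.2) = sh u y.1 (shuffle x.1 z.2) := sh_swap u x.1 y.1 z.2
      linarith
    exact Prod.ext h1 h2
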